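/- arXiv:0911.5182 — 3 statements merged into one kernel-verified Lean document; each statement's English description precedes it below -/
import Mathlib

section
/- Let K/ℚ_p be an unramified extension of degree a with Frobenius σ, V a K-vector space of finite dimension m, F a K-linear endomorphism of V. View V as a ℚ_p-vector space of dimension am and let σ act on V semilinearly (coordinatewise in a fixed K-basis). Then det_{ℚ_p}(σ^{−1} ∘ F) = ± Norm_{K/ℚ_p}(det_K F). -/
open Polynomial Module

variable {p : ℕ} [Fact p.Prime]

lemma matrix_det_one_add_of_sq_zero {n : Type*} [Fintype n] [DecidableEq n]
    {A : Matrix n n ℚ_[p]} (h : A * A = 0) : (1 + A).det = 1 := by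
  have hnil : IsNilpotent A := ⟨2, by rw [pow_two, h]⟩
  have hcp : A.charpoly = X ^ Fintype.card n := by
    have h2 := Matrix.isNilpotent_charpoly_sub_pow_of_isNilpotent hnil
    have := h2.eq_zero
    rwa [sub_eq_zero] at this
  have he : A.charpoly.eval (-1 : ℚ_[p]) = (Matrix.scalar n (-1) - A).det := by
    rw [Matrix.charpoly, eval_det, Matrix.matPolyEquiv_charmatrix]
    simp
  have hs : Matrix.scalar n (-1 : ℚ_[p]) - A = -(1 + A) := by
    rw [map_neg, map_one, neg_add]
    abel
  rw [hcp, eval_pow, eval_X, hs, Matrix.det_neg] at he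
  have := mul_left_cancel₀ (a := ((-1 : ℚ_[p]) ^ Fintype.card n))
    (pow_ne_zero _ (neg_ne_zero.mpr one_ne_zero)) (b := 1) (c := (1 + A).det)
    (by rw [mul_one]; exact he)
  exact this.symm

lemma det_id_add_of_sq_zero {V : Type*} [AddCommGroup V] [Module ℚ_[p] V]
    [FiniteDimensional ℚ_[p] V] {N : V →ₗ[ℚ_[p]] V} (h : N ∘ₗ N = 0) :
    LinearMap.det (LinearMap.id + N) = 1 := by
  classical
  let b := Module.Free.chooseBasis ℚ_[p] V
  rw [← LinearMap.det_toMatrix b, map_add, LinearMap.toMatrix_id]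
  apply matrix_det_one_add_of_sq_zero
  rw [← LinearMap.toMatrix_mul, Module.End.mul_eq_comp, h, map_zero]

lemma det_pi_family {K : Type*} [Field K] [Algebra ℚ_[p] K] [FiniteDimensional ℚ_[p] K]
    {m : ℕ} (f : Fin m → (K →ₗ[ℚ_[p]] K)) :
    LinearMap.det (LinearMap.pi fun i => (f i) ∘ₗ LinearMap.proj i)
      = ∏ i, LinearMap.det (f i) := by
  classical
  let b := Module.Free.chooseBasis ℚ_[p] K
  let e : (Σ _ : Fin m, Module.Free.ChooseBasisIndex ℚ_[p] K) ≃ _ :=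
    (Equiv.sigmaEquivProd (Fin m) (Module.Free.ChooseBasisIndex ℚ_[p] K)).trans
      (Equiv.prodComm _ _)
  let B := (Pi.basis fun _ : Fin m => b).reindex e
  rw [← LinearMap.det_toMatrix B]
  have hB : LinearMap.toMatrix B B (LinearMap.pi fun i => (f i) ∘ₗ LinearMap.proj i)
      = Matrix.blockDiagonal fun i => LinearMap.toMatrix b b (f i) := by
    ext ⟨a, i⟩ ⟨c, j⟩
    rw [LinearMap.toMatrix_apply, Matrix.blockDiagonal_apply]
    simp only [B, Basis.reindex_apply, Basis.repr_reindex, Finsupp.mapDomain_equiv_apply]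
    have he : e.symm (c, j) = ⟨j, c⟩ := rfl
    have he2 : e.symm (a, i) = ⟨i, a⟩ := rfl
    rw [he, he2, Pi.basis_apply, Pi.basis_repr]
    simp only [LinearMap.pi_apply, LinearMap.coe_comp, Function.comp_apply,
      LinearMap.proj_apply, Pi.single_apply]
    by_cases hij : i = j
    · subst hij; simp [LinearMap.toMatrix_apply]
    · simp [hij, Ne.symm hij]
  rw [hB, Matrix.det_blockDiagonal]
  simp [LinearMap.det_toMatrix]

lemma det_restrictScalars' {K : Type*} [Field K] [Algebra ℚ_[p] K] [FiniteDimensional ℚ_[p] K]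
    {m : ℕ} (F : (Fin m → K) →ₗ[K] (Fin m → K)) :
    LinearMap.det (F.restrictScalars ℚ_[p]) = Algebra.norm ℚ_[p] (LinearMap.det F) := by
  classical
  suffices H : ∀ M : Matrix (Fin m) (Fin m) K,
      LinearMap.det ((Matrix.toLin' M).restrictScalars ℚ_[p]) = Algebra.norm ℚ_[p] M.det by
    have := H (LinearMap.toMatrix' F)
    rwa [Matrix.toLin'_toMatrix', LinearMap.det_toMatrix'] at this
  intro M
  refine Matrix.diagonal_transvection_induction
    (fun M => LinearMap.det ((Matrix.toLin' M).restrictScalars ℚ_[p]) = Algebra.norm ℚ_[p] M.det)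
    M (fun D _ => ?_) (fun t => ?_) (fun A B hA hB => ?_)
  · have h1 : (Matrix.toLin' (Matrix.diagonal D)).restrictScalars ℚ_[p]
        = LinearMap.pi fun i =>
            ((Algebra.lmul ℚ_[p] K (D i)) : K →ₗ[ℚ_[p]] K) ∘ₗ LinearMap.proj i := by
      apply LinearMap.ext
      intro v
      funext i
      simp [Matrix.toLin'_apply, Matrix.mulVec_diagonal]
    rw [h1, det_pi_family, Matrix.det_diagonal, map_prod]
    exact Finset.prod_congr rfl fun i _ => rfl
  · have ht : t.toMatrix = 1 + Matrix.single t.i t.j t.c := rfl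
    have hE : Matrix.single t.i t.j t.c * Matrix.single t.i t.j t.c = 0 :=
      Matrix.single_mul_single_of_ne t.c t.i t.j t.i t.hij.symm t.c
    have hrs : (Matrix.toLin' t.toMatrix).restrictScalars ℚ_[p]
        = LinearMap.id
          + (Matrix.toLin' (Matrix.single t.i t.j t.c)).restrictScalars ℚ_[p] := by
      rw [ht, map_add, Matrix.toLin'_one]
      rfl
    rw [t.det, map_one, hrs]
    apply det_id_add_of_sq_zero
    have : (Matrix.toLin' (Matrix.single t.i t.j t.c)).restrictScalars ℚ_[p] ∘ₗ
        (Matrix.toLin' (Matrix.single t.i t.j t.c)).restrictScalars ℚ_[p]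
        = (Matrix.toLin' (Matrix.single t.i t.j t.c * Matrix.single t.i t.j t.c)).restrictScalars ℚ_[p] := by
      rw [Matrix.toLin'_mul]
      rfl
    rw [this, hE, map_zero]; rfl
  · have : (Matrix.toLin' (A * B)).restrictScalars ℚ_[p]
        = (Matrix.toLin' A).restrictScalars ℚ_[p] ∘ₗ (Matrix.toLin' B).restrictScalars ℚ_[p] := by
      rw [Matrix.toLin'_mul]; rfl
    rw [this, LinearMap.det_comp, hA, hB, Matrix.det_mul, map_mul]

lemma det_galois_gen_pm {K : Type*} [Field K] [Algebra ℚ_[p] K] [FiniteDimensional ℚ_[p] K]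
    [IsGalois ℚ_[p] K] (σ : K ≃ₐ[ℚ_[p]] K) (hσ : ∀ τ : K ≃ₐ[ℚ_[p]] K, ∃ i : ℕ, τ = σ ^ i) :
    LinearMap.det (σ.toLinearMap : K →ₗ[ℚ_[p]] K) = 1 ∨
      LinearMap.det (σ.toLinearMap : K →ₗ[ℚ_[p]] K) = -1 := by
  classical
  set a := Module.finrank ℚ_[p] K with ha
  have ha0 : 0 < a := Module.finrank_pos
  have hcard : Fintype.card (K ≃ₐ[ℚ_[p]] K) = a := by
    rw [← Nat.card_eq_fintype_card]; exact IsGalois.card_aut_eq_finrank ℚ_[p] K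
  have horder : orderOf σ = a := by
    rw [← hcard, ← Nat.card_eq_fintype_card]
    apply orderOf_eq_card_of_forall_mem_zpowers
    intro τ
    obtain ⟨i, hi⟩ := hσ τ
    exact ⟨i, by simp [hi]⟩
  set φ : Module.End ℚ_[p] K := σ.toLinearMap with hφ
  have hpow : ∀ i : ℕ, φ ^ i = (σ ^ i).toLinearMap := by
    intro i
    induction i with
    | zero => ext x; simp
    | succ n ih =>
      ext x
      rw [pow_succ, Module.End.mul_apply, ih]
      simp [pow_succ, Module.End.mul_apply, ih, AlgEquiv.mul_apply, hφ]
  have hint : IsIntegral ℚ_[p] φ := LinearMap.isIntegral φ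
  set q := minpoly ℚ_[p] φ with hq
  have hqmonic : q.Monic := minpoly.monic hint
  have haeval : (Polynomial.aeval φ) ((X : ℚ_[p][X]) ^ a - 1) = 0 := by
    rw [map_sub, map_pow, aeval_X, map_one, hpow a, ← horder, pow_orderOf_eq_one]
    ext x; simp
  have hXa : ((X : ℚ_[p][X]) ^ a - 1).Monic := by
    have := monic_X_pow_sub_C (1 : ℚ_[p]) ha0.ne'
    rwa [map_one] at this
  have hXadeg : ((X : ℚ_[p][X]) ^ a - 1).natDegree = a := by
    have := natDegree_X_pow_sub_C (n := a) (r := (1 : ℚ_[p]))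
    rwa [map_one] at this
  have hdvd : q ∣ (X : ℚ_[p][X]) ^ a - 1 := minpoly.dvd ℚ_[p] φ haeval
  -- linear independence of powers of σ
  have hinj : Function.Injective
      (fun i : Fin a => ((σ ^ (i : ℕ) : K ≃ₐ[ℚ_[p]] K) : K →ₐ[ℚ_[p]] K)) := by
    intro i j hij
    have h2 : (σ ^ (i : ℕ) : K ≃ₐ[ℚ_[p]] K) = σ ^ (j : ℕ) := by
      apply AlgEquiv.coe_algHom_injective
      exact hij
    have := pow_injOn_Iio_orderOf (x := σ) (by rw [horder]; exact i.isLt)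
      (by rw [horder]; exact j.isLt) h2
    exact Fin.ext this
  have li : LinearIndependent ℚ_[p]
      (fun i : Fin a => ((σ ^ (i : ℕ) : K ≃ₐ[ℚ_[p]] K)).toLinearMap) := by
    exact (linearIndependent_algHom_toLinearMap' ℚ_[p] K K).comp
      (fun i : Fin a => ((σ ^ (i : ℕ) : K ≃ₐ[ℚ_[p]] K) : K →ₐ[ℚ_[p]] K)) hinj
  have hdegge : a ≤ q.natDegree := by
    by_contra hlt
    push_neg at hlt
    have h0 : (Polynomial.aeval φ) q = 0 := minpoly.aeval ℚ_[p] φ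
    rw [Polynomial.aeval_eq_sum_range] at h0
    have hsum : ∑ i : Fin a, q.coeff (i : ℕ) • ((σ ^ (i : ℕ) : K ≃ₐ[ℚ_[p]] K)).toLinearMap
        = 0 := by
      have hsub : Finset.range (q.natDegree + 1) ⊆ Finset.range a := by
        apply Finset.range_subset_range.mpr
        omega
      have h1 : ∑ i ∈ Finset.range a, q.coeff i • φ ^ i = 0 := by
        rw [← h0]
        symm
        apply Finset.sum_subset hsub
        intro i _ hi
        rw [Finset.mem_range, not_lt] at hi
        rw [Polynomial.coeff_eq_zero_of_natDegree_lt (by omega), zero_smul]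
      rw [Fin.sum_univ_eq_sum_range (fun i => q.coeff i • ((σ ^ i : K ≃ₐ[ℚ_[p]] K)).toLinearMap)]
      rw [← h1]
      exact Finset.sum_congr rfl fun i _ => by rw [hpow]
    have := Fintype.linearIndependent_iff.mp li (fun i => q.coeff (i : ℕ)) hsum
      ⟨q.natDegree, hlt⟩
    simp only at this
    rw [hqmonic.coeff_natDegree] at this
    exact one_ne_zero this
  have hqeq : q = (X : ℚ_[p][X]) ^ a - 1 := by
    exact (Polynomial.eq_of_monic_of_dvd_of_natDegree_le hqmonic hXa hdvd
      (by rw [hXadeg]; exact hdegge)).symm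
  have hchar : φ.charpoly = (X : ℚ_[p][X]) ^ a - 1 := by
    have hmd : q ∣ φ.charpoly := LinearMap.minpoly_dvd_charpoly φ
    have hcm : φ.charpoly.Monic := LinearMap.charpoly_monic φ
    have hcd : φ.charpoly.natDegree = a := LinearMap.charpoly_natDegree (f := φ)
    have := Polynomial.eq_of_monic_of_dvd_of_natDegree_le hqmonic hcm hmd
      (by rw [hcd]; exact hdegge)
    rw [this, hqeq]
  have hdet : LinearMap.det φ = (-1 : ℚ_[p]) ^ a * (-1) := by
    rw [LinearMap.det_eq_sign_charpoly_coeff, hchar, ← ha]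
    congr 1
    simp [coeff_X_pow, ha0.ne']
    omega
  rcases Nat.even_or_odd a with hpar | hpar
  · right
    rw [show LinearMap.det (σ.toLinearMap : K →ₗ[ℚ_[p]] K) = LinearMap.det φ from rfl, hdet,
      hpar.neg_one_pow, one_mul]
  · left
    rw [show LinearMap.det (σ.toLinearMap : K →ₗ[ℚ_[p]] K) = LinearMap.det φ from rfl, hdet,
      hpar.neg_one_pow]
    ring


/-- Lemma 3.5: Let K/ℚ_p be a finite Galois extension of degree a with
cyclic Galois group generated by the Frobenius σ (e.g. K unramified of degree a),
V = K^m, F a K-linear endomorphism of V, and g = σ⁻¹ ∘ F the ℚ_p-linear map acting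
coordinatewise by σ⁻¹ after F. Then det_{ℚ_p}(g) = ± Norm_{K/ℚ_p}(det_K F). -/
theorem stmt10 (p : ℕ) [Fact p.Prime] (K : Type*) [Field K] [Algebra ℚ_[p] K]
    [FiniteDimensional ℚ_[p] K] [IsGalois ℚ_[p] K]
    (σ : K ≃ₐ[ℚ_[p]] K) (hσ : ∀ τ : K ≃ₐ[ℚ_[p]] K, ∃ i : ℕ, τ = σ ^ i)
    (m : ℕ) (F : (Fin m → K) →ₗ[K] (Fin m → K))
    (g : (Fin m → K) →ₗ[ℚ_[p]] (Fin m → K))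
    (hg : ∀ (v : Fin m → K) (i : Fin m), g v i = σ.symm (F v i)) :
    LinearMap.det g = Algebra.norm ℚ_[p] (LinearMap.det F) ∨
      LinearMap.det g = - Algebra.norm ℚ_[p] (LinearMap.det F) := by
  classical
  set σV : (Fin m → K) →ₗ[ℚ_[p]] (Fin m → K) :=
    LinearMap.pi fun i => (σ.symm.toLinearMap : K →ₗ[ℚ_[p]] K) ∘ₗ LinearMap.proj i with hσV
  have hgeq : g = σV ∘ₗ (F.restrictScalars ℚ_[p]) := by
    apply LinearMap.ext
    intro v
    funext i
    rw [hg]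
    simp [hσV]
  have hdetg : LinearMap.det g
      = (LinearMap.det (σ.symm.toLinearMap : K →ₗ[ℚ_[p]] K)) ^ m
        * Algebra.norm ℚ_[p] (LinearMap.det F) := by
    rw [hgeq, LinearMap.det_comp, det_restrictScalars']
    congr 1
    rw [hσV, det_pi_family]
    simp
  have hσdet := det_galois_gen_pm σ hσ
  have hss : σ.symm.toLinearMap ∘ₗ (σ.toLinearMap : K →ₗ[ℚ_[p]] K) = LinearMap.id := by
    ext x; simp
  have hprod : LinearMap.det (σ.symm.toLinearMap : K →ₗ[ℚ_[p]] K)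
      * LinearMap.det (σ.toLinearMap : K →ₗ[ℚ_[p]] K) = 1 := by
    rw [← LinearMap.det_comp, hss, LinearMap.det_id]
  have hsymm : LinearMap.det (σ.symm.toLinearMap : K →ₗ[ℚ_[p]] K) = 1 ∨
      LinearMap.det (σ.symm.toLinearMap : K →ₗ[ℚ_[p]] K) = -1 := by
    rcases hσdet with h | h
    · left; rw [h, mul_one] at hprod; exact hprod
    · right; rw [h, mul_neg_one] at hprod; exact neg_eq_iff_eq_neg.mp hprod
  rcases hsymm with h | h
  · left; rw [hdetg, h, one_pow, one_mul]
  · rcases Nat.even_or_odd m with hm | hm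
    · left; rw [hdetg, h, hm.neg_one_pow, one_mul]
    · right; rw [hdetg, h, hm.neg_one_pow]; ring
end

section
/- Let p be prime, d ≥ 2 with p ∤ d, u ∈ {0,…,p−1}, 1 ≤ n ≤ d−1, and τ a permutation of {0,…,n−1}. Then ∑_{l=0}^{n−1} ( ⌊(pl + u − τ(l))/d⌋ + d·{(pl + u − τ(l))/d} ) ≥ ∑_{l=0}^{n−1} ( (p−1)l + u )/d + (d−1)∑_{l=0}^{n−1}( {(pl+u)/d} − {l/d} ), with equality if and only if τ(l) ≤ d·{(pl+u)/d} for all l. -/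
/-- Let p be prime, d ≥ 2 with p ∤ d, 0 ≤ u ≤ p−1, 1 ≤ n ≤ d−1, and τ
a permutation of {0,…,n−1}. Then
∑_l (⌊(pl+u−τ(l))/d⌋ + d·{(pl+u−τ(l))/d}) ≥ ∑_l ((p−1)l+u)/d + (d−1)∑_l({(pl+u)/d} − {l/d}),
with equality if and only if τ(l) ≤ d·{(pl+u)/d} for all l. -/
theorem stmt13 (p d u n : ℕ) (hp : p.Prime) (hd : 2 ≤ d) (hpd : ¬ p ∣ d)
    (hu : u ≤ p - 1) (hn1 : 1 ≤ n) (hnd : n ≤ d - 1) (τ : Equiv.Perm (Fin n))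
    (L R : ℚ)
    (hL : L = ∑ l : Fin n,
      ((⌊((((p * (l : ℕ) + u : ℕ) : ℤ) - ((τ l : ℕ) : ℤ)) : ℚ) / d⌋ : ℚ)
        + (d : ℚ) * Int.fract (((((p * (l : ℕ) + u : ℕ) : ℤ) - ((τ l : ℕ) : ℤ)) : ℚ) / d)))
    (hR : R = (∑ l : Fin n, (((p : ℚ) - 1) * (l : ℕ) + u) / d)
      + ((d : ℚ) - 1) * ∑ l : Fin n,
          (Int.fract (((p : ℚ) * (l : ℕ) + u) / d) - Int.fract (((l : ℕ) : ℚ) / d))) :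
    L ≥ R ∧
      (L = R ↔ ∀ l : Fin n, ((τ l : ℕ) : ℚ) ≤ (d : ℚ) * Int.fract (((p : ℚ) * (l : ℕ) + u) / d)) := by
  have hd0 : (0:ℚ) < d := by positivity
  have hdz : (d:ℚ) ≠ 0 := hd0.ne'
  -- E l : 0/1 indicator
  set E : Fin n → ℚ := fun l => if (τ l : ℕ) ≤ (p * (l:ℕ) + u) % d then 0 else 1 with hE
  -- basic bounds
  have hlt : ∀ l : Fin n, (l : ℕ) < d := fun l =>
    lt_of_lt_of_le l.2 (le_trans hnd (Nat.sub_le d 1))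
  -- fract of (p l + u)/d
  have hfr : ∀ l : Fin n, Int.fract (((p : ℚ) * (l : ℕ) + u) / d)
      = (((p * (l:ℕ) + u) % d : ℕ) : ℚ) / d := by
    intro l
    have : ((p : ℚ) * (l : ℕ) + u) = (((p * (l:ℕ) + u : ℕ) : ℤ) : ℚ) := by push_cast; ring
    rw [this, Int.fract_div_intCast_eq_div_intCast_mod]
    norm_cast
  have hfl : ∀ l : Fin n, Int.fract (((l : ℕ) : ℚ) / d) = ((l:ℕ):ℚ)/d := by
    intro l
    apply Int.fract_eq_self.2
    constructor
    · positivity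
    · rw [div_lt_one hd0]; exact_mod_cast hlt l
  -- key pointwise identity
  have hkey : ∀ l : Fin n,
      ((⌊((((p * (l : ℕ) + u : ℕ) : ℤ) - ((τ l : ℕ) : ℤ)) : ℚ) / d⌋ : ℚ)
        + (d : ℚ) * Int.fract (((((p * (l : ℕ) + u : ℕ) : ℤ) - ((τ l : ℕ) : ℤ)) : ℚ) / d))
      = ((((p : ℚ) - 1) * (l : ℕ) + u) / d
        + ((d:ℚ)-1) * (Int.fract (((p : ℚ) * (l : ℕ) + u) / d) - Int.fract (((l : ℕ) : ℚ) / d)))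
        + ((d:ℚ)-1) * E l + (((l:ℕ):ℚ) - ((τ l : ℕ):ℚ)) := by
    intro l
    have htd : (τ l : ℕ) < d := lt_of_lt_of_le (τ l).2 (le_trans hnd (Nat.sub_le d 1))
    set m : ℤ := ((p * (l : ℕ) + u : ℕ) : ℤ) with hm
    set t : ℤ := ((τ l : ℕ) : ℤ) with ht
    set r : ℕ := (p * (l:ℕ) + u) % d with hr
    have hrm : m % (d:ℤ) = (r:ℤ) := by simp [hm, hr, Int.natCast_mod]
    have hrd : r < d := Nat.mod_lt _ (by omega)
    have ht0 : 0 ≤ t := Int.natCast_nonneg _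
    have htd' : t < d := by rw [ht]; exact_mod_cast htd
    -- floor = x - fract x
    have hfloor : (⌊((m - t : ℤ) : ℚ) / d⌋ : ℚ)
        = ((m - t : ℤ) : ℚ) / d - Int.fract (((m - t : ℤ) : ℚ) / d) := by
      rw [Int.fract]; ring
    have hfx : Int.fract (((m - t : ℤ) : ℚ) / d)
        = (((m - t) % (d:ℤ) : ℤ) : ℚ) / d :=
      Int.fract_div_intCast_eq_div_intCast_mod
    rw [show ((m:ℚ) - (t:ℚ)) = (((m - t : ℤ)):ℚ) by push_cast; ring,
      hfloor, hfx, hfr l, hfl l]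
    by_cases hc : (τ l : ℕ) ≤ r
    · have hE0 : E l = 0 := by simp [hE, hr, hc]; exact hc
      have hc' : t ≤ (r:ℤ) := by rw [ht]; exact_mod_cast hc
      have hmod : (m - t) % (d:ℤ) = (r:ℤ) - t := by
        rw [Int.sub_emod, hrm, Int.emod_eq_of_lt ht0 htd',
          Int.emod_eq_of_lt (by omega) (by omega)]
      rw [hmod, hE0, ht]
      have hmq : ((m:ℤ):ℚ) = (p:ℚ) * (l:ℕ) + u := by rw [hm]; push_cast; ring
      push_cast
      rw [hmq]
      field_simp
      ring
    · have hE1 : E l = 1 := by simp [hE, hr, hc]; exact Nat.lt_of_not_le hc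
      have hcr : (r:ℤ) < t := by omega
      have hmod : (m - t) % (d:ℤ) = (r:ℤ) - t + d := by
        calc (m - t) % (d:ℤ) = ((r:ℤ) - t) % d := by
              rw [Int.sub_emod, hrm, Int.emod_eq_of_lt ht0 htd']
          _ = ((r:ℤ) - t + (d:ℤ) * 1) % d := (Int.add_mul_emod_self_left ..).symm
          _ = (r:ℤ) - t + d := by
              rw [Int.emod_eq_of_lt (by omega) (by omega)]; ring
      rw [hmod, hE1, ht]
      have hmq : ((m:ℤ):ℚ) = (p:ℚ) * (l:ℕ) + u := by rw [hm]; push_cast; ring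
      push_cast
      rw [hmq]
      field_simp
      ring
  have hEnn : ∀ l : Fin n, 0 ≤ E l := by
    intro l; simp only [hE]; split <;> norm_num
  have hd1 : (0:ℚ) < (d:ℚ) - 1 := by
    have : (2:ℚ) ≤ (d:ℚ) := by exact_mod_cast hd
    linarith
  have hperm : ∑ l : Fin n, (((τ l : ℕ):ℚ)) = ∑ l : Fin n, ((l:ℕ):ℚ) :=
    Equiv.sum_comp τ (fun l : Fin n => ((l:ℕ):ℚ))
  have hsum : L = R + ((d:ℚ)-1) * ∑ l : Fin n, E l := by
    rw [hL, hR, Finset.sum_congr rfl (fun l _ => hkey l)]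
    simp only [Finset.sum_add_distrib, Finset.sum_sub_distrib, ← Finset.mul_sum, hperm]
    ring
  have hiff : (∑ l : Fin n, E l = 0) ↔ ∀ l : Fin n, E l = 0 := by
    rw [Finset.sum_eq_zero_iff_of_nonneg (fun l _ => hEnn l)]
    exact ⟨fun h l => h l (Finset.mem_univ l), fun h l _ => h l⟩
  have hcond : ∀ l : Fin n, (E l = 0 ↔
      ((τ l : ℕ) : ℚ) ≤ (d : ℚ) * Int.fract (((p : ℚ) * (l : ℕ) + u) / d)) := by
    intro l
    rw [hfr l, mul_div_cancel₀ _ hdz]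
    constructor
    · intro h
      by_contra hc
      have hc' : ¬ (τ l : ℕ) ≤ (p * (l:ℕ) + u) % d := by
        intro h2; exact hc (by exact_mod_cast h2)
      simp [hE, hc'] at h
    · intro h
      have : (τ l : ℕ) ≤ (p * (l:ℕ) + u) % d := by exact_mod_cast h
      simp [hE, this]
  constructor
  · rw [hsum]
    have : 0 ≤ ((d:ℚ)-1) * ∑ l : Fin n, E l :=
      mul_nonneg hd1.le (Finset.sum_nonneg (fun l _ => hEnn l))
    linarith
  · constructor
    · intro h
      have h0 : ((d:ℚ)-1) * ∑ l : Fin n, E l = 0 := by linarith [hsum ▸ h]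
      have h1 : ∑ l : Fin n, E l = 0 := by
        rcases mul_eq_zero.1 h0 with h' | h'
        · exact absurd h' hd1.ne'
        · exact h'
      exact fun l => (hcond l).1 (hiff.1 h1 l)
    · intro h
      have h0 : ∑ l : Fin n, E l = 0 := hiff.2 (fun l => (hcond l).2 (h l))
      rw [hsum, h0, mul_zero, add_zero]
end

section
/- For any integer m and permutation value t with 0 ≤ t ≤ d·{m/d} (where m = pl + u), we have {(m − t)/d} = {m/d} − t/d; consequently, for a permutation τ of {0,…,n−1} with τ(l) ≤ d{(pl+u)/d} for all l, ∑_{l=0}^{n−1} d·{(pl+u−τ(l))/d} = ∑_{l=0}^{n−1} ( d·{(pl+u)/d} − l ). -/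
/-- For any integer m and 0 ≤ t ≤ d·{m/d}, one has
{(m − t)/d} = {m/d} − t/d. Consequently, for a permutation τ of {0,…,n−1} with
τ(l) ≤ d·{(pl+u)/d} for all l, ∑_l d·{(pl+u−τ(l))/d} = ∑_l (d·{(pl+u)/d} − l). -/
theorem stmt14 (d : ℕ) (hd : 2 ≤ d) :
    (∀ (m : ℤ) (t : ℕ), ((t : ℚ)) ≤ (d : ℚ) * Int.fract ((m : ℚ) / d) →
        Int.fract ((((m - (t : ℤ)) : ℤ) : ℚ) / d) = Int.fract ((m : ℚ) / d) - (t : ℚ) / d)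
      ∧ ∀ (p u n : ℕ) (τ : Equiv.Perm (Fin n)),
          (∀ l : Fin n, ((τ l : ℕ) : ℚ) ≤ (d : ℚ) * Int.fract (((p : ℚ) * (l : ℕ) + u) / d)) →
          ∑ l : Fin n, (d : ℚ) *
              Int.fract (((((p * (l : ℕ) + u : ℕ) : ℤ) - ((τ l : ℕ) : ℤ) : ℤ) : ℚ) / d)
            = ∑ l : Fin n,
                ((d : ℚ) * Int.fract (((p : ℚ) * (l : ℕ) + u) / d) - ((l : ℕ) : ℚ)) := by
  have hd0 : (0 : ℚ) < (d : ℚ) := by positivity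
  have key : ∀ (m : ℤ) (t : ℕ), ((t : ℚ)) ≤ (d : ℚ) * Int.fract ((m : ℚ) / d) →
      Int.fract ((((m - (t : ℤ)) : ℤ) : ℚ) / d) = Int.fract ((m : ℚ) / d) - (t : ℚ) / d := by
    intro m t ht
    rw [Int.fract_eq_iff]
    refine ⟨?_, ?_, ⟨⌊(m : ℚ) / d⌋, ?_⟩⟩
    · have : (t : ℚ) / d ≤ Int.fract ((m : ℚ) / d) := by
        rw [div_le_iff₀ hd0]; linarith [ht]
      linarith
    · have h1 : Int.fract ((m : ℚ) / d) < 1 := Int.fract_lt_one _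
      have h2 : (0 : ℚ) ≤ (t : ℚ) / d := by positivity
      linarith
    · push_cast
      rw [sub_div]
      linarith [Int.self_sub_fract ((m : ℚ) / d)]
  refine ⟨key, ?_⟩
  intro p u n τ hτ
  have step : ∀ l : Fin n,
      (d : ℚ) * Int.fract (((((p * (l : ℕ) + u : ℕ) : ℤ) - ((τ l : ℕ) : ℤ) : ℤ) : ℚ) / d)
        = (d : ℚ) * Int.fract (((p : ℚ) * (l : ℕ) + u) / d) - ((τ l : ℕ) : ℚ) := by
    intro l
    have h := key ((p * (l : ℕ) + u : ℕ) : ℤ) (τ l : ℕ) (by push_cast; push_cast at hτ; exact hτ l)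
    rw [h, mul_sub, mul_div_cancel₀ _ hd0.ne']
    push_cast
    ring_nf
  rw [Finset.sum_congr rfl (fun l _ => step l)]
  rw [Finset.sum_sub_distrib, Finset.sum_sub_distrib]
  congr 1
  exact Equiv.sum_comp τ (fun l : Fin n => ((l : ℕ) : ℚ))
end
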